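/- For the effective bandwidth r_θ of a Markov-modulated On-Off source with peak rate P, transition rates λ, μ, and steady-state On probability p = μ/(λ+μ): r_θ = (-(λ+μ-θP) + √((λ+μ-θP)² + 4μθP))/(2θ) satisfies pP ≤ r_θ ≤ P for all θ > 0, and r_θ is non-decreasing in θ. -/
import Mathlib


set_option maxHeartbeats 800000 in
private lemma eb_bounds_aux
    (lam mu P : ℝ) (hlam : 0 < lam) (hmu : 0 < mu) (hP : 0 < P)
    (p : ℝ) (hp : p = mu / (lam + mu))
    (r : ℝ → ℝ)
    (hr : ∀ θ : ℝ, r θ =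
      (-(lam + mu - θ * P) + Real.sqrt ((lam + mu - θ * P) ^ 2 + 4 * mu * θ * P)) / (2 * θ)) :
    ∀ θ : ℝ, 0 < θ → p * P ≤ r θ ∧ r θ ≤ P := by
  have hs : (0:ℝ) < lam + mu := by linarith
  intro θ hθ
  have hD : (0:ℝ) ≤ (lam + mu - θ * P) ^ 2 + 4 * mu * θ * P := by positivity
  have hsq : Real.sqrt ((lam + mu - θ * P) ^ 2 + 4 * mu * θ * P) ^ 2
      = (lam + mu - θ * P) ^ 2 + 4 * mu * θ * P := Real.sq_sqrt hD
  have hnn : 0 ≤ Real.sqrt ((lam + mu - θ * P) ^ 2 + 4 * mu * θ * P) := Real.sqrt_nonneg _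
  constructor
  · -- lower bound
    have hq : (2 * θ * mu * P / (lam + mu)) * (lam + mu) = 2 * θ * mu * P := by
      field_simp
    have hq0 : (0:ℝ) ≤ 2 * θ * mu * P / (lam + mu) := by positivity
    have hq2 : 2 * θ * mu * P / (lam + mu) ≤ 2 * θ * P := by
      rw [div_le_iff₀ hs]
      nlinarith [mul_pos (mul_pos hθ hP) hlam]
    have hkey : (lam + mu - θ * P) + 2 * θ * mu * P / (lam + mu)
        ≤ Real.sqrt ((lam + mu - θ * P) ^ 2 + 4 * mu * θ * P) := by
      rcases le_or_gt ((lam + mu - θ * P) + 2 * θ * mu * P / (lam + mu)) 0 with h | h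
      · linarith
      · have hb2 : ((lam + mu - θ * P) + 2 * θ * mu * P / (lam + mu)) ^ 2
            ≤ (lam + mu - θ * P) ^ 2 + 4 * mu * θ * P := by
          nlinarith [hq, mul_nonneg hq0 (show (0:ℝ) ≤ 2 * θ * P - 2 * θ * mu * P / (lam + mu) by linarith)]
        calc (lam + mu - θ * P) + 2 * θ * mu * P / (lam + mu)
            ≤ |(lam + mu - θ * P) + 2 * θ * mu * P / (lam + mu)| := le_abs_self _
          _ = Real.sqrt (((lam + mu - θ * P) + 2 * θ * mu * P / (lam + mu)) ^ 2) :=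
              (Real.sqrt_sq_eq_abs _).symm
          _ ≤ Real.sqrt ((lam + mu - θ * P) ^ 2 + 4 * mu * θ * P) := Real.sqrt_le_sqrt hb2
    rw [hr θ, le_div_iff₀ (by positivity)]
    have hpq : p * P * (2 * θ) = 2 * θ * mu * P / (lam + mu) := by
      rw [hp]; ring
    linarith
  · -- upper bound
    have hub : Real.sqrt ((lam + mu - θ * P) ^ 2 + 4 * mu * θ * P) ≤ lam + mu + θ * P := by
      calc Real.sqrt ((lam + mu - θ * P) ^ 2 + 4 * mu * θ * P)
          ≤ Real.sqrt ((lam + mu + θ * P) ^ 2) := by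
            apply Real.sqrt_le_sqrt
            nlinarith [mul_pos hθ hP]
        _ = lam + mu + θ * P := by
            rw [Real.sqrt_sq (by positivity)]
    rw [hr θ, div_le_iff₀ (by positivity)]
    linarith

set_option maxHeartbeats 800000 in
private lemma eb_mono_aux
    (lam mu P : ℝ) (hlam : 0 < lam) (hmu : 0 < mu) (hP : 0 < P)
    (p : ℝ) (hp : p = mu / (lam + mu))
    (r : ℝ → ℝ)
    (hr : ∀ θ : ℝ, r θ =
      (-(lam + mu - θ * P) + Real.sqrt ((lam + mu - θ * P) ^ 2 + 4 * mu * θ * P)) / (2 * θ)) :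
    ∀ θ₁ θ₂ : ℝ, 0 < θ₁ → θ₁ ≤ θ₂ → r θ₁ ≤ r θ₂ := by
  have main := eb_bounds_aux lam mu P hlam hmu hP p hp r hr
  intro θ₁ θ₂ h1 h12
  have h2 : 0 < θ₂ := lt_of_lt_of_le h1 h12
  obtain ⟨hlo, hhi⟩ := main θ₂ h2
  have hppos : 0 < p * P := by rw [hp]; positivity
  have hr2pos : 0 < r θ₂ := lt_of_lt_of_le hppos hlo
  -- root equation at θ₂
  have hD2 : (0:ℝ) ≤ (lam + mu - θ₂ * P) ^ 2 + 4 * mu * θ₂ * P := by positivity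
  have he : 2 * θ₂ * r θ₂ + (lam + mu - θ₂ * P)
      = Real.sqrt ((lam + mu - θ₂ * P) ^ 2 + 4 * mu * θ₂ * P) := by
    rw [hr θ₂]
    field_simp
    ring
  have hsq2 : (2 * θ₂ * r θ₂ + (lam + mu - θ₂ * P)) ^ 2
      = (lam + mu - θ₂ * P) ^ 2 + 4 * mu * θ₂ * P := by
    rw [he]; exact Real.sq_sqrt hD2
  have hroot : θ₂ * r θ₂ ^ 2 + (lam + mu - θ₂ * P) * r θ₂ = mu * P := by
    have h4 : (4 * θ₂) * (θ₂ * r θ₂ ^ 2 + (lam + mu - θ₂ * P) * r θ₂)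
        = (4 * θ₂) * (mu * P) := by linear_combination hsq2
    exact mul_left_cancel₀ (by positivity) h4
  -- now compare with θ₁
  have hD1 : (0:ℝ) ≤ (lam + mu - θ₁ * P) ^ 2 + 4 * mu * θ₁ * P := by positivity
  have hsq1 : Real.sqrt ((lam + mu - θ₁ * P) ^ 2 + 4 * mu * θ₁ * P) ^ 2
      = (lam + mu - θ₁ * P) ^ 2 + 4 * mu * θ₁ * P := Real.sq_sqrt hD1
  have hnn1 : 0 ≤ Real.sqrt ((lam + mu - θ₁ * P) ^ 2 + 4 * mu * θ₁ * P) := Real.sqrt_nonneg _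
  have hkey : (2 * θ₁ * r θ₂ + (lam + mu - θ₁ * P)) ^ 2
      - ((lam + mu - θ₁ * P) ^ 2 + 4 * mu * θ₁ * P)
      = 4 * (θ₁ * ((θ₂ - θ₁) * (r θ₂ * (P - r θ₂)))) := by
    linear_combination (4 * θ₁) * hroot
  have hc2 : (lam + mu - θ₁ * P) ^ 2 + 4 * mu * θ₁ * P
      ≤ (2 * θ₁ * r θ₂ + (lam + mu - θ₁ * P)) ^ 2 := by
    nlinarith [hkey, mul_nonneg (mul_nonneg h1.le (sub_nonneg.mpr h12))
      (mul_nonneg hr2pos.le (sub_nonneg.mpr hhi))]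
  have habs : -(lam + mu - θ₁ * P)
      ≤ Real.sqrt ((lam + mu - θ₁ * P) ^ 2 + 4 * mu * θ₁ * P) := by
    have h' := Real.sqrt_le_sqrt (show (lam + mu - θ₁ * P) ^ 2
        ≤ (lam + mu - θ₁ * P) ^ 2 + 4 * mu * θ₁ * P by
      nlinarith [mul_pos (mul_pos hmu h1) hP])
    rw [Real.sqrt_sq_eq_abs] at h'
    linarith [neg_abs_le (lam + mu - θ₁ * P)]
  have hcgt : -Real.sqrt ((lam + mu - θ₁ * P) ^ 2 + 4 * mu * θ₁ * P)
      < 2 * θ₁ * r θ₂ + (lam + mu - θ₁ * P) := by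
    nlinarith [habs, mul_pos h1 hr2pos]
  have hc0 : 0 ≤ 2 * θ₁ * r θ₂ + (lam + mu - θ₁ * P) := by
    by_contra h
    push_neg at h
    have hA : (0:ℝ) < Real.sqrt ((lam + mu - θ₁ * P) ^ 2 + 4 * mu * θ₁ * P)
        + (2 * θ₁ * r θ₂ + (lam + mu - θ₁ * P)) := by linarith
    have hB : (0:ℝ) < Real.sqrt ((lam + mu - θ₁ * P) ^ 2 + 4 * mu * θ₁ * P)
        - (2 * θ₁ * r θ₂ + (lam + mu - θ₁ * P)) := by linarith
    have hprod := mul_pos hA hB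
    have hid : (Real.sqrt ((lam + mu - θ₁ * P) ^ 2 + 4 * mu * θ₁ * P)
        + (2 * θ₁ * r θ₂ + (lam + mu - θ₁ * P)))
        * (Real.sqrt ((lam + mu - θ₁ * P) ^ 2 + 4 * mu * θ₁ * P)
        - (2 * θ₁ * r θ₂ + (lam + mu - θ₁ * P)))
        = Real.sqrt ((lam + mu - θ₁ * P) ^ 2 + 4 * mu * θ₁ * P) ^ 2
          - (2 * θ₁ * r θ₂ + (lam + mu - θ₁ * P)) ^ 2 := by ring
    linarith [hsq1, hc2]
  have hle : Real.sqrt ((lam + mu - θ₁ * P) ^ 2 + 4 * mu * θ₁ * P)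
      ≤ 2 * θ₁ * r θ₂ + (lam + mu - θ₁ * P) := by
    calc Real.sqrt ((lam + mu - θ₁ * P) ^ 2 + 4 * mu * θ₁ * P)
        ≤ Real.sqrt ((2 * θ₁ * r θ₂ + (lam + mu - θ₁ * P)) ^ 2) := Real.sqrt_le_sqrt hc2
      _ = 2 * θ₁ * r θ₂ + (lam + mu - θ₁ * P) := Real.sqrt_sq hc0
  rw [hr θ₁, div_le_iff₀ (by positivity)]
  linarith

/-- The effective bandwidth `r_θ` of an MMOO source with peak rate `P`, rates `λ, μ`,
and steady-state On probability `p = μ/(λ+μ)` satisfies `pP ≤ r_θ ≤ P` for all `θ > 0`,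
and `θ ↦ r_θ` is non-decreasing on `(0, ∞)`. -/
theorem effective_bandwidth_bounds
    (lam mu P : ℝ) (hlam : 0 < lam) (hmu : 0 < mu) (hP : 0 < P)
    (p : ℝ) (hp : p = mu / (lam + mu))
    (r : ℝ → ℝ)
    (hr : ∀ θ : ℝ, r θ =
      (-(lam + mu - θ * P) + Real.sqrt ((lam + mu - θ * P) ^ 2 + 4 * mu * θ * P)) / (2 * θ)) :
    (∀ θ : ℝ, 0 < θ → p * P ≤ r θ ∧ r θ ≤ P) ∧
      (∀ θ₁ θ₂ : ℝ, 0 < θ₁ → θ₁ ≤ θ₂ → r θ₁ ≤ r θ₂) := by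
  exact ⟨eb_bounds_aux lam mu P hlam hmu hP p hp r hr,
         eb_mono_aux lam mu P hlam hmu hP p hp r hr⟩
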